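/- Under the Bregman setup, suppose that the Gâteaux derivative map b' : U → X* is uniformly continuous on every bounded convex subset of U. Let (x_i) and (y_i) be sequences in U such that at least one of them is norm-bounded and lim_{i→∞} ‖x_i − y_i‖ = 0. Then for every x ∈ C, lim_{i→∞} (B(x, x_i) − B(x, y_i)) = 0. -/

import Mathlib

open Filter Topology

/-- A uniformly continuous map on a bounded convex set has bounded image
(chain argument along segments). -/
lemma bounded_image_of_uc_on_convex
    {X E : Type*} [NormedAddCommGroup X] [NormedSpace ℝ X] [NormedAddCommGroup E]
    {W : Set X} {f : X → E} (hWc : Convex ℝ W) (hWb : Bornology.IsBounded W)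
    (hf : UniformContinuousOn f W) {w₀ : X} (hw₀ : w₀ ∈ W) :
    ∃ M : ℝ, 0 ≤ M ∧ ∀ w ∈ W, ‖f w‖ ≤ M := by
  obtain ⟨δ, hδ, hδ'⟩ := (Metric.uniformContinuousOn_iff.mp hf) 1 one_pos
  obtain ⟨D, hD⟩ := Metric.isBounded_iff.mp hWb
  have hD0 : 0 ≤ D := le_trans dist_nonneg (hD hw₀ hw₀)
  obtain ⟨N, hN⟩ := exists_nat_gt (D / δ)
  have hN0 : 0 < (N : ℝ) := lt_of_le_of_lt (div_nonneg hD0 hδ.le) hN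
  have hDN : D / N < δ := by
    rw [div_lt_iff₀ hN0]
    have h1 : D < N * δ := by
      have := (div_lt_iff₀ hδ).mp hN
      linarith
    linarith [mul_comm (N:ℝ) δ]
  refine ⟨‖f w₀‖ + N, by positivity, fun w hw => ?_⟩
  -- points on the segment
  set d : X := w - w₀ with hd
  have hmem : ∀ k : ℕ, k ≤ N → w₀ + ((k : ℝ) / N) • d ∈ W := by
    intro k hk
    have ht0 : (0:ℝ) ≤ (k : ℝ) / N := by positivity
    have ht1 : (k : ℝ) / N ≤ 1 := by
      rw [div_le_one hN0]; exact_mod_cast hk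
    have := hWc hw₀ hw (by linarith : (0:ℝ) ≤ 1 - (k:ℝ)/N) ht0 (by ring)
    convert this using 1
    module
  have key : ∀ k : ℕ, k ≤ N → ‖f (w₀ + ((k : ℝ) / N) • d) - f w₀‖ ≤ k := by
    intro k hk
    induction k with
    | zero => simp
    | succ n ih =>
      have hn : n ≤ N := Nat.le_of_succ_le hk
      have h1 := ih hn
      have hcast : ((n + 1 : ℕ) : ℝ) = (n : ℝ) + 1 := by push_cast; ring
      rw [hcast]
      have hdist : dist (w₀ + (((n:ℝ)+1) / N) • d) (w₀ + ((n : ℝ) / N) • d) < δ := by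
        have heq : (w₀ + (((n:ℝ)+1) / N) • d) - (w₀ + ((n : ℝ) / N) • d)
            = ((1:ℝ) / (N:ℝ)) • d := by
          rw [show (((n:ℝ)+1)/N) = (n:ℝ)/N + 1/(N:ℝ) by ring]
          module
        rw [dist_eq_norm, heq, norm_smul]
        have hnd : ‖d‖ ≤ D := by
          rw [hd, ← dist_eq_norm]; exact hD hw hw₀
        calc ‖(1:ℝ)/(N:ℝ)‖ * ‖d‖ = ‖d‖ / N := by
              rw [Real.norm_eq_abs, abs_of_nonneg (by positivity)]; ring
        _ ≤ D / N := by gcongr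
        _ < δ := hDN
      have hmem1 : w₀ + (((n:ℝ)+1) / N) • d ∈ W := by
        have := hmem (n+1) hk; rw [hcast] at this; exact this
      have h2 : dist (f (w₀ + (((n:ℝ)+1) / N) • d)) (f (w₀ + ((n : ℝ) / N) • d)) < 1 :=
        hδ' _ hmem1 _ (hmem _ hn) hdist
      rw [dist_eq_norm] at h2
      calc ‖f (w₀ + (((n:ℝ)+1) / N) • d) - f w₀‖
          ≤ ‖f (w₀ + (((n:ℝ)+1) / N) • d) - f (w₀ + ((n : ℝ) / N) • d)‖
            + ‖f (w₀ + ((n : ℝ) / N) • d) - f w₀‖ := norm_sub_le_norm_sub_add_norm_sub _ _ _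
      _ ≤ (n:ℝ) + 1 := by linarith
  have hw' : w₀ + ((N : ℝ) / N) • d = w := by
    rw [div_self hN0.ne']; simp [hd]
  have := key N le_rfl
  rw [hw'] at this
  calc ‖f w‖ = ‖(f w - f w₀) + f w₀‖ := by congr 1; abel
  _ ≤ ‖f w - f w₀‖ + ‖f w₀‖ := norm_add_le _ _
  _ ≤ ‖f w₀‖ + N := by linarith

/-- The subgradient inequality from the Gâteaux derivative of a convex function. -/
lemma grad_ineq
    {X : Type*} [NormedAddCommGroup X] [NormedSpace ℝ X]
    {C : Set X} (hCconv : Convex ℝ C)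
    {b : X → ℝ} (hbconv : ConvexOn ℝ C b)
    {b' : X → X →L[ℝ] ℝ}
    (hb' : ∀ y ∈ interior C, ∀ v : X,
      Tendsto (fun t : ℝ => (b (y + t • v) - b y) / t) (𝓝[≠] (0:ℝ)) (𝓝 (b' y v)))
    {u v : X} (hu : u ∈ C) (hv : v ∈ interior C) :
    b' v (u - v) ≤ b u - b v := by
  have hvC : v ∈ C := interior_subset hv
  have hlim : Tendsto (fun t : ℝ => (b (v + t • (u - v)) - b v) / t)
      (𝓝[>] (0:ℝ)) (𝓝 (b' v (u - v))) :=
    (hb' v hv (u - v)).mono_left (nhdsWithin_mono _ (fun t ht => ne_of_gt ht))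
  refine le_of_tendsto hlim ?_
  filter_upwards [Ioo_mem_nhdsGT_of_mem (by norm_num : (0:ℝ) ∈ Set.Ico 0 1)]
    with t ht
  obtain ⟨ht0, ht1⟩ := ht
  have hmem := hbconv.2 hvC hu (by linarith : (0:ℝ) ≤ 1 - t) ht0.le (by ring)
  have heq : (1 - t) • v + t • u = v + t • (u - v) := by module
  rw [heq] at hmem
  rw [div_le_iff₀ ht0]
  calc b (v + t • (u - v)) - b v ≤ (1 - t) * b v + t * b u - b v := by
        simpa [smul_eq_mul] using sub_le_sub_right hmem (b v)
  _ = (b u - b v) * t := by ring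

/-- Under the Bregman setup, suppose `b' : U → X*` is uniformly
continuous on every bounded convex subset of `U`. If `(x_i)` and `(y_i)` are sequences
in `U`, at least one of them is norm-bounded, and `‖x_i − y_i‖ → 0`, then for every
`x ∈ C` one has `B(x, x_i) − B(x, y_i) → 0`. -/
theorem bregman_divergence_difference_tendsto_zero
    {X : Type*} [NormedAddCommGroup X] [NormedSpace ℝ X]
    (C : Set X) (hC : C.Nonempty) (hCconv : Convex ℝ C)
    (hU : (interior C).Nonempty)
    (b : X → ℝ) (hbconv : ConvexOn ℝ C b)
    (b' : X → X →L[ℝ] ℝ)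
    (hb' : ∀ y ∈ interior C, ∀ v : X,
      Tendsto (fun t : ℝ => (b (y + t • v) - b y) / t) (𝓝[≠] (0:ℝ)) (𝓝 (b' y v)))
    (hb'uc : ∀ W : Set X, W ⊆ interior C → Bornology.IsBounded W → Convex ℝ W →
      UniformContinuousOn b' W)
    (x y : ℕ → X) (hx : ∀ i, x i ∈ interior C) (hy : ∀ i, y i ∈ interior C)
    (hbdd : Bornology.IsBounded (Set.range x) ∨ Bornology.IsBounded (Set.range y))
    (hdist : Tendsto (fun i => ‖x i - y i‖) atTop (𝓝 0)) :
    ∀ z ∈ C,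
      Tendsto (fun i =>
        (b z - b (x i) - b' (x i) (z - x i)) - (b z - b (y i) - b' (y i) (z - y i)))
        atTop (𝓝 0) := by
  intro z hz
  -- the difference sequence is bounded
  obtain ⟨Md, hMd⟩ : ∃ Md : ℝ, ∀ i, ‖x i - y i‖ ≤ Md := by
    obtain ⟨Md, hMd⟩ := (hdist.bddAbove_range).imp (fun a h => h)
    exact ⟨Md, fun i => hMd ⟨i, rfl⟩⟩
  -- both ranges are bounded
  have hboth : Bornology.IsBounded (Set.range x) ∧ Bornology.IsBounded (Set.range y) := by
    rcases hbdd with h | h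
    · refine ⟨h, ?_⟩
      obtain ⟨R, hR⟩ := isBounded_iff_forall_norm_le.mp h
      refine isBounded_iff_forall_norm_le.mpr ⟨R + Md, ?_⟩
      rintro _ ⟨i, rfl⟩
      calc ‖y i‖ = ‖x i - (x i - y i)‖ := by congr 1; abel
      _ ≤ ‖x i‖ + ‖x i - y i‖ := norm_sub_le _ _
      _ ≤ R + Md := add_le_add (hR _ ⟨i, rfl⟩) (hMd i)
    · refine ⟨?_, h⟩
      obtain ⟨R, hR⟩ := isBounded_iff_forall_norm_le.mp h
      refine isBounded_iff_forall_norm_le.mpr ⟨R + Md, ?_⟩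
      rintro _ ⟨i, rfl⟩
      calc ‖x i‖ = ‖y i + (x i - y i)‖ := by congr 1; abel
      _ ≤ ‖y i‖ + ‖x i - y i‖ := norm_add_le _ _
      _ ≤ R + Md := add_le_add (hR _ ⟨i, rfl⟩) (hMd i)
  set W : Set X := convexHull ℝ (Set.range x ∪ Set.range y) with hW
  have hWU : W ⊆ interior C := by
    apply convexHull_min _ hCconv.interior
    rintro _ (⟨i, rfl⟩ | ⟨i, rfl⟩)
    exacts [hx i, hy i]
  have hWb : Bornology.IsBounded W :=
    isBounded_convexHull.mpr (hboth.1.union hboth.2)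
  have hWc : Convex ℝ W := convex_convexHull _ _
  have hxW : ∀ i, x i ∈ W := fun i =>
    subset_convexHull _ _ (Set.mem_union_left _ ⟨i, rfl⟩)
  have hyW : ∀ i, y i ∈ W := fun i =>
    subset_convexHull _ _ (Set.mem_union_right _ ⟨i, rfl⟩)
  have huc := hb'uc W hWU hWb hWc
  -- bound on ‖b'‖ over W
  obtain ⟨M, hM0, hM⟩ := bounded_image_of_uc_on_convex hWc hWb huc (hxW 0)
  -- bound on ‖z - y i‖
  obtain ⟨R, hR⟩ := isBounded_iff_forall_norm_le.mp hboth.2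
  have hR0 : 0 ≤ R := le_trans (norm_nonneg _) (hR _ ⟨0, rfl⟩)
  set K : ℝ := ‖z‖ + R with hK
  have hK0 : 0 ≤ K := by positivity
  have hzy : ∀ i, ‖z - y i‖ ≤ K := fun i =>
    le_trans (norm_sub_le _ _) (add_le_add_right (hR _ ⟨i, rfl⟩) _)
  -- ‖b' (y i) - b' (x i)‖ → 0
  have hb'diff : Tendsto (fun i => ‖b' (y i) - b' (x i)‖) atTop (𝓝 0) := by
    rw [Metric.tendsto_atTop] at hdist ⊢
    intro ε hε
    obtain ⟨δ, hδ, hδ'⟩ := (Metric.uniformContinuousOn_iff.mp huc) ε hε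
    obtain ⟨N, hN⟩ := hdist δ hδ
    refine ⟨N, fun n hn => ?_⟩
    have h1 : ‖x n - y n‖ < δ := by
      have := hN n hn
      rwa [Real.dist_eq, sub_zero, abs_of_nonneg (norm_nonneg _)] at this
    have h2 : dist (y n) (x n) < δ := by
      rw [dist_eq_norm, norm_sub_rev]; exact h1
    have h3 := hδ' _ (hyW n) _ (hxW n) h2
    rw [Real.dist_eq, sub_zero, abs_of_nonneg (norm_nonneg _), ← dist_eq_norm]
    exact h3
  -- the squeeze
  apply squeeze_zero_norm
    (a := fun i => 2 * M * ‖x i - y i‖ + K * ‖b' (y i) - b' (x i)‖)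
  · intro i
    have hA1 : b' (x i) (y i - x i) ≤ b (y i) - b (x i) :=
      grad_ineq hCconv hbconv hb' (interior_subset (hy i)) (hx i)
    have hA2 : b' (y i) (x i - y i) ≤ b (x i) - b (y i) :=
      grad_ineq hCconv hbconv hb' (interior_subset (hx i)) (hy i)
    have hMx := hM _ (hxW i)
    have hMy := hM _ (hyW i)
    have hb1 : |b' (x i) (y i - x i)| ≤ M * ‖x i - y i‖ := by
      calc |b' (x i) (y i - x i)| = ‖b' (x i) (y i - x i)‖ := rfl
      _ ≤ ‖b' (x i)‖ * ‖y i - x i‖ := ContinuousLinearMap.le_opNorm _ _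
      _ = ‖b' (x i)‖ * ‖x i - y i‖ := by rw [norm_sub_rev]
      _ ≤ M * ‖x i - y i‖ := mul_le_mul_of_nonneg_right hMx (norm_nonneg _)
    have hb2 : |b' (y i) (x i - y i)| ≤ M * ‖x i - y i‖ := by
      calc |b' (y i) (x i - y i)| = ‖b' (y i) (x i - y i)‖ := rfl
      _ ≤ ‖b' (y i)‖ * ‖x i - y i‖ := ContinuousLinearMap.le_opNorm _ _
      _ ≤ M * ‖x i - y i‖ := mul_le_mul_of_nonneg_right hMy (norm_nonneg _)
    have hAabs : |b (y i) - b (x i)| ≤ M * ‖x i - y i‖ := by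
      rw [abs_le]
      constructor
      · have := (abs_le.mp hb1).1
        linarith
      · have := (abs_le.mp hb2).1
        linarith
    have hBeq : b' (y i) (z - y i) - b' (x i) (z - x i)
        = (b' (y i) - b' (x i)) (z - y i) + b' (x i) (x i - y i) := by
      simp only [ContinuousLinearMap.sub_apply, map_sub]
      ring
    have hBabs : |b' (y i) (z - y i) - b' (x i) (z - x i)|
        ≤ K * ‖b' (y i) - b' (x i)‖ + M * ‖x i - y i‖ := by
      rw [hBeq]
      calc |(b' (y i) - b' (x i)) (z - y i) + b' (x i) (x i - y i)|
          ≤ |(b' (y i) - b' (x i)) (z - y i)| + |b' (x i) (x i - y i)| := abs_add_le _ _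
      _ ≤ ‖b' (y i) - b' (x i)‖ * ‖z - y i‖ + M * ‖x i - y i‖ := by
          refine add_le_add ?_ ?_
          · calc |(b' (y i) - b' (x i)) (z - y i)| = ‖(b' (y i) - b' (x i)) (z - y i)‖ := rfl
            _ ≤ ‖b' (y i) - b' (x i)‖ * ‖z - y i‖ := ContinuousLinearMap.le_opNorm _ _
          calc |b' (x i) (x i - y i)| = ‖b' (x i) (x i - y i)‖ := rfl
          _ ≤ ‖b' (x i)‖ * ‖x i - y i‖ := ContinuousLinearMap.le_opNorm _ _
          _ ≤ M * ‖x i - y i‖ := mul_le_mul_of_nonneg_right hMx (norm_nonneg _)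
      _ ≤ K * ‖b' (y i) - b' (x i)‖ + M * ‖x i - y i‖ := by
          refine add_le_add ?_ le_rfl
          rw [mul_comm K]
          exact mul_le_mul_of_nonneg_left (hzy i) (norm_nonneg (b' (y i) - b' (x i)))
    have hsplit : (b z - b (x i) - b' (x i) (z - x i)) - (b z - b (y i) - b' (y i) (z - y i))
        = (b (y i) - b (x i)) + (b' (y i) (z - y i) - b' (x i) (z - x i)) := by ring
    rw [Real.norm_eq_abs, hsplit]
    calc |(b (y i) - b (x i)) + (b' (y i) (z - y i) - b' (x i) (z - x i))|
        ≤ |b (y i) - b (x i)| + |b' (y i) (z - y i) - b' (x i) (z - x i)| := abs_add_le _ _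
    _ ≤ M * ‖x i - y i‖ + (K * ‖b' (y i) - b' (x i)‖ + M * ‖x i - y i‖) :=
        add_le_add hAabs hBabs
    _ = 2 * M * ‖x i - y i‖ + K * ‖b' (y i) - b' (x i)‖ := by ring
  · have h1 : Tendsto (fun i => 2 * M * ‖x i - y i‖) atTop (𝓝 (2 * M * 0)) :=
      hdist.const_mul _
    have h2 : Tendsto (fun i => K * ‖b' (y i) - b' (x i)‖) atTop (𝓝 (K * 0)) :=
      hb'diff.const_mul _
    have := h1.add h2
    simpa using this
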